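/- Fix t ∈ [0,δ) and x ∈ ℝ with 0 < x < r_t − r_δ, and define h(y) := −∫_0^y g(v) dv − (x−y)²/(2 r_t), ȳ := −x·r_δ/(r_t − r_δ), y₁* := x − r_t and y₂* := x + r_t. Then h'(y) > 0 on (−∞, y₁*), h'(y) < 0 on (y₁*, ȳ), h'(y) > 0 on (ȳ, y₂*), and h'(y) < 0 on (y₂*, ∞); in particular y₁* is a global maximum of h on (−∞, ȳ] and y₂* is a global maximum of h on [ȳ, ∞). Moreover h(y₂*) − h(y₁*) = 2x. -/

import Mathlib

open MeasureTheory

/-- Analysis of `h(y) = −∫_0^y g − (x−y)²/(2r_t)` for `t ∈ [0,δ)` and `0 < x < r_t − r_δ`: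
sign of `h'` on the four intervals determined by `y₁* = x − r_t`, `ȳ = −x·r_δ/(r_t − r_δ)`
and `y₂* = x + r_t`, the global maximality of `y₁*` on `(−∞, ȳ]` and of `y₂*` on `[ȳ, ∞)`,
and the identity `h(y₂*) − h(y₁*) = 2x`. -/
theorem laplace_phase_function_analysis
    (T κ δ : ℝ) (hT : 0 < T) (hδ : δ ∈ Set.Ioo 0 T)
    (η w r g : ℝ → ℝ)
    (hη : ∀ t ∈ Set.Icc (0:ℝ) T,
      HasDerivWithinAt η (η t ^ 2 - 2 * κ * η t - 1) (Set.Icc (0:ℝ) T) t)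
    (hηT : η T = 1)
    (hw : ∀ t, w t = Real.exp (∫ s in t..T, (-κ + η s)))
    (hr : ∀ t, r t = ∫ s in t..T, ((w s) ^ 2)⁻¹)
    (hrδ : 0 < r δ)
    (hg : ∀ x, g x = if |x| ≤ r δ then -x / r δ else -Real.sign x)
    (t x : ℝ) (ht : t ∈ Set.Ico (0:ℝ) δ) (hx : 0 < x) (hx' : x < r t - r δ)
    (h : ℝ → ℝ)
    (hh : ∀ y : ℝ, h y = -(∫ v in (0:ℝ)..y, g v) - (x - y) ^ 2 / (2 * r t)) :
    (∀ y : ℝ, y < x - r t → 0 < deriv h y) ∧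
    (∀ y : ℝ, x - r t < y → y < -x * r δ / (r t - r δ) → deriv h y < 0) ∧
    (∀ y : ℝ, -x * r δ / (r t - r δ) < y → y < x + r t → 0 < deriv h y) ∧
    (∀ y : ℝ, x + r t < y → deriv h y < 0) ∧
    (∀ y : ℝ, y ≤ -x * r δ / (r t - r δ) → h y ≤ h (x - r t)) ∧
    (∀ y : ℝ, -x * r δ / (r t - r δ) ≤ y → h y ≤ h (x + r t)) ∧
    h (x + r t) - h (x - r t) = 2 * x := by
  set A := r δ with hAdef
  set B := r t with hBdef
  have hApos : 0 < A := hrδ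
  have hAB : A < B := by linarith
  have hBpos : 0 < B := by linarith
  have hBA : 0 < B - A := by linarith
  -- clamp representation of g
  have hgclamp : ∀ v : ℝ, g v = max (-1) (min 1 (-v / A)) := by
    intro v
    rw [hg v]
    by_cases habs : |v| ≤ A
    · obtain ⟨h1, h2⟩ := abs_le.mp habs
      rw [if_pos habs, min_eq_right, max_eq_right]
      · rw [le_div_iff₀ hApos]; linarith
      · rw [div_le_one hApos]; linarith
    · rw [if_neg habs]
      push_neg at habs
      rcases lt_or_ge v 0 with hneg | hpos
      · have hv : v < -A := by
          have := abs_of_neg hneg; linarith [habs, this ▸ habs]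
        rw [Real.sign_of_neg hneg, min_eq_left, max_eq_right (by norm_num : (-1:ℝ) ≤ 1)]
        · norm_num
        · rw [le_div_iff₀ hApos]; linarith
      · have hv : A < v := by
          have := abs_of_nonneg hpos; linarith [this ▸ habs]
        have hvpos : 0 < v := lt_trans hApos hv
        rw [Real.sign_of_pos hvpos, min_eq_right, max_eq_left]
        · rw [div_le_iff₀ hApos]; linarith
        · rw [div_le_one hApos]; linarith
  have hgL : ∀ v : ℝ, v ≤ -A → g v = 1 := by
    intro v hv
    rw [hgclamp v, min_eq_left, max_eq_right (by norm_num : (-1:ℝ) ≤ 1)]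
    rw [le_div_iff₀ hApos]; linarith
  have hgM : ∀ v : ℝ, -A ≤ v → v ≤ A → g v = -v / A := by
    intro v h1 h2
    rw [hgclamp v, min_eq_right, max_eq_right]
    · rw [le_div_iff₀ hApos]; linarith
    · rw [div_le_one hApos]; linarith
  have hgR : ∀ v : ℝ, A ≤ v → g v = -1 := by
    intro v hv
    rw [hgclamp v, min_eq_right, max_eq_left]
    · rw [div_le_iff₀ hApos]; linarith
    · rw [div_le_one hApos]; linarith
  have hgc : Continuous g := by
    have : g = fun v => max (-1) (min 1 (-v / A)) := funext hgclamp
    rw [this]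
    exact continuous_const.max (continuous_const.min (continuous_id.neg.div_const A))
  -- derivative of h
  have hD : ∀ y : ℝ, HasDerivAt h (-g y + (x - y) / B) y := by
    intro y
    have h1 : HasDerivAt (fun u => ∫ v in (0:ℝ)..u, g v) (g y) y :=
      intervalIntegral.integral_hasDerivAt_right (hgc.intervalIntegrable _ _)
        hgc.stronglyMeasurable.stronglyMeasurableAtFilter hgc.continuousAt
    have h2 : HasDerivAt (fun u => (x - u) ^ 2 / (2 * B)) (-(x - y) / B) y := by
      have h3 : HasDerivAt (fun u => (x - u) ^ 2)
          ((2:ℕ) * (x - y) ^ (2 - 1) * (0 - 1)) y :=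
        ((hasDerivAt_const y x).sub (hasDerivAt_id y)).pow 2
      have h4 := h3.div_const (2 * B)
      refine h4.congr_deriv ?_
      field_simp
      ring
    have heq : h = fun u => -(∫ v in (0:ℝ)..u, g v) - (x - u) ^ 2 / (2 * B) := funext hh
    rw [heq]
    refine (h1.neg.sub h2).congr_deriv ?_
    ring
  have hderiv : ∀ y : ℝ, deriv h y = -g y + (x - y) / B := fun y => (hD y).deriv
  set ybar := -x * A / (B - A) with hybardef
  have hybar1 : -A < ybar := by
    have h1 : -x * A / (B - A) = -(x * A / (B - A)) := by ring
    have h2 : x * A / (B - A) < A := by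
      rw [div_lt_iff₀ hBA]; nlinarith
    rw [hybardef, h1]; linarith
  have hybar0 : ybar < 0 := by
    have h2 : 0 < x * A / (B - A) := div_pos (mul_pos hx hApos) hBA
    have h1 : -x * A / (B - A) = -(x * A / (B - A)) := by ring
    rw [hybardef, h1]; linarith
  have hy1A : x - B < -A := by linarith
  have hA2 : A < x + B := by linarith
  -- sign claims
  have S1 : ∀ y : ℝ, y < x - B → 0 < deriv h y := by
    intro y hy
    rw [hderiv y, hgL y (by linarith)]
    have : (1:ℝ) < (x - y) / B := (one_lt_div hBpos).mpr (by linarith)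
    linarith
  have S2 : ∀ y : ℝ, x - B < y → y < ybar → deriv h y < 0 := by
    intro y hy1 hy2
    rw [hderiv y]
    rcases le_or_gt y (-A) with hc | hc
    · rw [hgL y hc]
      have : (x - y) / B < 1 := (div_lt_one hBpos).mpr (by linarith)
      linarith
    · have hyA : y ≤ A := by linarith
      rw [hgM y hc.le hyA]
      have key : y * B + (x - y) * A < 0 := by
        have h1 : y < -x * A / (B - A) := hy2
        rw [lt_div_iff₀ hBA] at h1
        nlinarith
      have heq : -(-y / A) + (x - y) / B = (y * B + (x - y) * A) / (A * B) := by
        field_simp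
      rw [heq]
      exact div_neg_of_neg_of_pos key (mul_pos hApos hBpos)
  have S3 : ∀ y : ℝ, ybar < y → y < x + B → 0 < deriv h y := by
    intro y hy1 hy2
    rw [hderiv y]
    rcases le_or_gt y A with hc | hc
    · have hyA : -A ≤ y := by linarith
      rw [hgM y hyA hc]
      have key : 0 < y * B + (x - y) * A := by
        have h1 : -x * A / (B - A) < y := hy1
        rw [div_lt_iff₀ hBA] at h1
        nlinarith
      have heq : -(-y / A) + (x - y) / B = (y * B + (x - y) * A) / (A * B) := by
        field_simp
      rw [heq]
      exact div_pos key (mul_pos hApos hBpos)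
    · rw [hgR y hc.le]
      have : (-1:ℝ) < (x - y) / B := by
        rw [lt_div_iff₀ hBpos]; linarith
      linarith
  have S4 : ∀ y : ℝ, x + B < y → deriv h y < 0 := by
    intro y hy
    rw [hderiv y, hgR y (by linarith)]
    have : (x - y) / B < -1 := by
      rw [div_lt_iff₀ hBpos]; linarith
    linarith
    -- monotonicity pieces
  have hdiff : ∀ y : ℝ, DifferentiableAt ℝ h y := fun y => (hD y).differentiableAt
  have hcont : Continuous h := by
    rw [continuous_iff_continuousAt]; exact fun y => (hdiff y).continuousAt
  have hy1bar : x - B ≤ ybar := by linarith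
  have hbary2 : ybar ≤ x + B := by linarith
  have M1 : MonotoneOn h (Set.Iic (x - B)) := by
    apply monotoneOn_of_deriv_nonneg (convex_Iic _) hcont.continuousOn
      (fun y _ => (hdiff y).differentiableWithinAt)
    intro y hy
    rw [interior_Iic] at hy
    exact (S1 y hy).le
  have M2 : AntitoneOn h (Set.Icc (x - B) ybar) := by
    apply antitoneOn_of_deriv_nonpos (convex_Icc _ _) hcont.continuousOn
      (fun y _ => (hdiff y).differentiableWithinAt)
    intro y hy
    rw [interior_Icc] at hy
    exact (S2 y hy.1 hy.2).le
  have M3 : MonotoneOn h (Set.Icc ybar (x + B)) := by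
    apply monotoneOn_of_deriv_nonneg (convex_Icc _ _) hcont.continuousOn
      (fun y _ => (hdiff y).differentiableWithinAt)
    intro y hy
    rw [interior_Icc] at hy
    exact (S3 y hy.1 hy.2).le
  have M4 : AntitoneOn h (Set.Ici (x + B)) := by
    apply antitoneOn_of_deriv_nonpos (convex_Ici _) hcont.continuousOn
      (fun y _ => (hdiff y).differentiableWithinAt)
    intro y hy
    rw [interior_Ici] at hy
    exact (S4 y hy).le
  have C5 : ∀ y : ℝ, y ≤ ybar → h y ≤ h (x - B) := by
    intro y hy
    rcases le_or_gt y (x - B) with hc | hc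
    · exact M1 hc (Set.mem_Iic.mpr le_rfl) hc
    · exact M2 (Set.mem_Icc.mpr ⟨le_rfl, hy1bar⟩) (Set.mem_Icc.mpr ⟨hc.le, hy⟩) hc.le
  have C6 : ∀ y : ℝ, ybar ≤ y → h y ≤ h (x + B) := by
    intro y hy
    rcases le_or_gt y (x + B) with hc | hc
    · exact M3 (Set.mem_Icc.mpr ⟨hy, hc⟩) (Set.mem_Icc.mpr ⟨hbary2, le_rfl⟩) hc
    · exact M4 (Set.mem_Ici.mpr le_rfl) (Set.mem_Ici.mpr hc.le) hc.le
  -- the integral identity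
  have hint : ∀ a b : ℝ, IntervalIntegrable g volume a b :=
    fun a b => hgc.intervalIntegrable a b
  have e1 : (∫ v in (x - B)..(-A), g v) = -A - (x - B) := by
    rw [intervalIntegral.integral_congr (g := fun _ => (1:ℝ)) ?_,
      intervalIntegral.integral_const, smul_eq_mul, mul_one]
    intro v hv
    rw [Set.uIcc_of_le (by linarith : x - B ≤ -A)] at hv
    exact hgL v hv.2
  have e2 : (∫ v in (-A)..A, g v) = 0 := by
    rw [intervalIntegral.integral_congr (g := fun v => -v / A) ?_]
    · rw [intervalIntegral.integral_div, intervalIntegral.integral_neg,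
        integral_id]
      ring
    · intro v hv
      rw [Set.uIcc_of_le (by linarith : -A ≤ A)] at hv
      exact hgM v hv.1 hv.2
  have e3 : (∫ v in A..(x + B), g v) = -(x + B - A) := by
    rw [intervalIntegral.integral_congr (g := fun _ => (-1:ℝ)) ?_,
      intervalIntegral.integral_const, smul_eq_mul]
    · ring
    · intro v hv
      rw [Set.uIcc_of_le (by linarith : A ≤ x + B)] at hv
      exact hgR v hv.1
  have esplit : (∫ v in (x - B)..(x + B), g v) = -2 * x := by
    rw [← intervalIntegral.integral_add_adjacent_intervals (hint (x - B) (-A))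
        (hint (-A) (x + B)),
      ← intervalIntegral.integral_add_adjacent_intervals (hint (-A) A) (hint A (x + B)),
      e1, e2, e3]
    ring
  have etotal : (∫ v in (0:ℝ)..(x + B), g v) - (∫ v in (0:ℝ)..(x - B), g v) = -2 * x := by
    rw [show (∫ v in (0:ℝ)..(x + B), g v)
        = (∫ v in (0:ℝ)..(x - B), g v) + ∫ v in (x - B)..(x + B), g v from
      (intervalIntegral.integral_add_adjacent_intervals (hint 0 (x - B))
        (hint (x - B) (x + B))).symm, esplit]
    ring
  refine ⟨S1, S2, S3, S4, C5, C6, ?_⟩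
  rw [hh (x + B), hh (x - B),
    show (x - (x + B)) ^ 2 = (x - (x - B)) ^ 2 from by ring]
  linarith [etotal]
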